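/- arXiv:1811.11141 — 4 statements merged into one kernel-verified Lean document; each statement's English description precedes it below -/
import Mathlib

section
/- If τc ≤ τb and τb − τc < a, then max(τc, τb) + T(p₂ + p₃) < max(τc + T(p₃), τb) + T(p₂), where T(M) = a + b·M with a > 0, b ≥ 0, and p₂, p₃ > 0. -/
theorem merge_condition_C2 (a b τc τb p₂ p₃ : ℝ) (ha : 0 < a) (hb : 0 ≤ b)
    (hp₂ : 0 < p₂) (hp₃ : 0 < p₃) (hτ₁ : τc ≤ τb) (hτ₂ : τb - τc < a)
    (T : ℝ → ℝ) (hT : ∀ M, T M = a + b * M) :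
    max τc τb + T (p₂ + p₃) < max (τc + T p₃) τb + T p₂ := by
  simp only [hT]
  rw [max_eq_right hτ₁]
  have h3 : 0 ≤ b * p₃ := mul_nonneg hb hp₃.le
  rcases le_total (τc + (a + b * p₃)) τb with h | h
  · rw [max_eq_right h]; nlinarith
  · rw [max_eq_left h]; nlinarith
end

section
/- Merging is beneficial if and only if τb − τc < a: for T(M) = a + b·M with a > 0, b ≥ 0 and p₂, p₃ > 0, the inequality max(τc, τb) + T(p₂ + p₃) < max(τc + T(p₃), τb) + T(p₂) holds if and only if τb − τc < a. -/
theorem merge_beneficial_iff (a b τc τb p₂ p₃ : ℝ) (ha : 0 < a) (hb : 0 ≤ b)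
    (hp₂ : 0 < p₂) (hp₃ : 0 < p₃)
    (T : ℝ → ℝ) (hT : ∀ M, T M = a + b * M) :
    max τc τb + T (p₂ + p₃) < max (τc + T p₃) τb + T p₂ ↔ τb - τc < a := by
  simp only [hT]
  have hbp : 0 ≤ b * p₃ := mul_nonneg hb hp₃.le
  rcases le_total τc τb with h | h <;>
    rcases le_total (τc + (a + b * p₃)) τb with h2 | h2 <;>
    simp [max_eq_left, max_eq_right, h, h2, max_eq_left_iff, max_eq_right_iff] <;>
    constructor <;> intro <;> nlinarith
end

section
/- In WFBP with τb(l) = τb(l+1) + tb(l+1), if for all 2 ≤ l ≤ L one has tc(l) ≤ tb(l−1), then the communication of every layer l ≥ 2 finishes by the time layer l−1's backward computation finishes, i.e., τc(l) + tc(l) ≤ τb(l−1) + tb(l−1) for all 2 ≤ l ≤ L, and consequently the iteration time equals t_f + Σₗ tb(l) + tc(1). -/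
theorem wfbp_case1 (L : ℕ) (hL : 1 ≤ L) (tf : ℝ) (htf : 0 ≤ tf)
    (tb tc τb τc : ℕ → ℝ) (htb : ∀ l, 0 ≤ tb l) (htc : ∀ l, 0 ≤ tc l)
    (hτbL : τb L = tf)
    (hτb : ∀ l, 1 ≤ l → l < L → τb l = τb (l + 1) + tb (l + 1))
    (hτcL : τc L = τb L + tb L)
    (hτc : ∀ l, 1 ≤ l → l < L → τc l = max (τc (l + 1) + tc (l + 1)) (τb l + tb l))
    (hhide : ∀ l, 2 ≤ l → l ≤ L → tc l ≤ tb (l - 1)) :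
    (∀ l, 2 ≤ l → l ≤ L → τc l + tc l ≤ τb (l - 1) + tb (l - 1)) ∧
    τc 1 + tc 1 = tf + (∑ l ∈ Finset.Icc 1 L, tb l) + tc 1 := by
  -- key: τc l = τb l + tb l for 1 ≤ l ≤ L
  have key : ∀ d, d < L → τc (L - d) = τb (L - d) + tb (L - d) := by
    intro d
    induction d with
    | zero => intro _; simpa using hτcL
    | succ d ih =>
      intro hd
      have hd' : d < L := by omega
      set l := L - (d + 1) with hl
      have h1 : 1 ≤ l := by omega
      have h2 : l < L := by omega
      have hsucc : l + 1 = L - d := by omega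
      have hb : τb l = τb (l + 1) + tb (l + 1) := hτb l h1 h2
      have hc : τc l = max (τc (l + 1) + tc (l + 1)) (τb l + tb l) := hτc l h1 h2
      have ihc : τc (l + 1) = τb (l + 1) + tb (l + 1) := by rw [hsucc]; exact ih hd'
      have hhide' : tc (l + 1) ≤ tb l := by
        have := hhide (l + 1) (by omega) (by omega)
        simpa using this
      have hle : τc (l + 1) + tc (l + 1) ≤ τb l + tb l := by
        rw [ihc, hb]
        have := htb l
        linarith
      rw [hc, max_eq_right hle]
  have keyb : ∀ d, d < L → τb (L - d) = tf + ∑ k ∈ Finset.Icc (L - d + 1) L, tb k := by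
    intro d
    induction d with
    | zero =>
      intro _
      simp [Finset.Icc_eq_empty_of_lt (by omega : L < L + 1), hτbL]
    | succ d ih =>
      intro hd
      have hd' : d < L := by omega
      set l := L - (d + 1) with hl
      have hsucc : l + 1 = L - d := by omega
      have hb : τb l = τb (l + 1) + tb (l + 1) := hτb l (by omega) (by omega)
      have ihb : τb (l + 1) = tf + ∑ k ∈ Finset.Icc (l + 1 + 1) L, tb k := by
        rw [hsucc]; exact ih hd'
      have hsum : ∑ k ∈ Finset.Icc (l + 1) L, tb k
          = tb (l + 1) + ∑ k ∈ Finset.Icc (l + 1 + 1) L, tb k := by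
        rw [Finset.Icc_eq_cons_Ioc (by omega : l + 1 ≤ L), Finset.sum_cons,
          ← Finset.Icc_add_one_left_eq_Ioc]
      rw [hb, ihb, hsum]; ring
  have h1L : L - (L - 1) = 1 := by omega
  have hτc1 : τc 1 = τb 1 + tb 1 := by
    have := key (L - 1) (by omega); rwa [h1L] at this
  have hτb1 : τb 1 = tf + ∑ k ∈ Finset.Icc 2 L, tb k := by
    have := keyb (L - 1) (by omega); rwa [h1L] at this
  constructor
  · intro l h2 hle
    have hlt : l - 1 < L := by omega
    have hkey : τc l = τb l + tb l := by
      have := key (L - l) (by omega)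
      rwa [show L - (L - l) = l by omega] at this
    have hb : τb (l - 1) = τb l + tb l := by
      have := hτb (l - 1) (by omega) hlt
      rwa [show l - 1 + 1 = l by omega] at this
    have hh := hhide l h2 hle
    rw [hkey, hb]
    linarith
  · have hsum : ∑ k ∈ Finset.Icc 1 L, tb k = tb 1 + ∑ k ∈ Finset.Icc 2 L, tb k := by
      rw [Finset.Icc_eq_cons_Ioc hL, Finset.sum_cons, ← Finset.Icc_add_one_left_eq_Ioc]; rfl
    rw [hτc1, hτb1, hsum]; ring
end

section
/- If layer l (3 ≤ l ≤ L) satisfies τb(l−2) − τc(l) < a, then making layer l a merged-gradient layer strictly decreases the communication finish time of layer l−1: max(τc(l), τb(l−2)) + T(p(l−1) + p(l)) < max(τc(l) + T(p(l)), τb(l−2)) + T(p(l−1)), where T(M) = a + b·M, a > 0, b ≥ 0, p(l), p(l−1) > 0. -/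
theorem merged_gradient_layer_improves (L l : ℕ) (hl₁ : 3 ≤ l) (hl₂ : l ≤ L)
    (a b : ℝ) (ha : 0 < a) (hb : 0 ≤ b) (τc τb p : ℕ → ℝ)
    (hp₁ : 0 < p l) (hp₂ : 0 < p (l - 1))
    (T : ℝ → ℝ) (hT : ∀ M, T M = a + b * M)
    (hcond : τb (l - 2) - τc l < a) :
    max (τc l) (τb (l - 2)) + T (p (l - 1) + p l) <
    max (τc l + T (p l)) (τb (l - 2)) + T (p (l - 1)) := by
  simp only [hT]
  have hmax : max (τc l + (a + b * p l)) (τb (l - 2)) = τc l + (a + b * p l) := by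
    apply max_eq_left; nlinarith [mul_nonneg hb hp₁.le]
  rw [hmax]
  rcases max_cases (τc l) (τb (l - 2)) with ⟨he, _⟩ | ⟨he, _⟩ <;> rw [he] <;>
    nlinarith [mul_nonneg hb hp₁.le, mul_nonneg hb hp₂.le]
end
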